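/- arXiv:0804.2357 — 4 statements merged into one kernel-verified Lean document; each statement's English description precedes it below -/
import Mathlib

section
/- Let h be a Floyd function on the regular tree 𝒯_n with base vertex x₀, and let p, p' be two distinct boundary points. If R is the combinatorial distance from x₀ to the unique bi-infinite geodesic joining p and p', then the Floyd distance satisfies δ(p, p') ≤ 2·∑_{r≥R} h(r), with equality when the geodesic from x₀ to its nearest point on that geodesic realizes the infimum (as stated in the paper, δ(p,p') = 2·∑_{r≥R} h(r)). -/
open SimpleGraph

/-- The Floyd length of a walk with base vertex `x₀` and Floyd function `h`. -/
noncomputable def floydLength {V : Type*} (G : SimpleGraph V) (x₀ : V) (h : ℕ → ℝ)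
    {x y : V} (w : G.Walk x y) : ℝ :=
  (w.darts.map (fun d => h (min (G.dist x₀ d.toProd.1) (G.dist x₀ d.toProd.2)))).sum

namespace FloydAux

variable {V : Type*} {G : SimpleGraph V}

lemma split_le [DecidableEq V] {x u v : V} (p : G.Walk x u) (hp : p.length = G.dist x u)
    (hv : v ∈ p.support) : G.dist x v + G.dist v u ≤ G.dist x u := by
  calc G.dist x v + G.dist v u
      ≤ (p.takeUntil v hv).length + (p.dropUntil v hv).length :=
        Nat.add_le_add (SimpleGraph.dist_le _) (SimpleGraph.dist_le _)
    _ = p.length := by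
        conv_rhs => rw [← SimpleGraph.Walk.take_spec p hv]
        rw [SimpleGraph.Walk.length_append]
    _ = G.dist x u := hp

lemma concat_isPath {x u v : V} {p : G.Walk x u} (hp : p.IsPath) (h : G.Adj u v)
    (hv : v ∉ p.support) : (p.concat h).IsPath := by
  rw [SimpleGraph.Walk.isPath_def] at hp ⊢
  rw [SimpleGraph.Walk.support_concat]
  simp [List.nodup_append, hp, hv, List.disjoint_singleton]
  rintro a ha rfl
  exact hv ha

lemma adj_dist_ne (hT : G.IsTree) (x : V) {u v : V} (huv : G.Adj u v) :
    G.dist x u ≠ G.dist x v := by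
  classical
  intro he
  obtain ⟨p, hp, hlen⟩ := hT.isConnected.exists_path_of_dist x u
  by_cases hv : v ∈ p.support
  · have h1 := split_le p hlen hv
    have h2 : G.dist v u = 1 := SimpleGraph.dist_eq_one_iff_adj.mpr huv.symm
    omega
  · obtain ⟨q, hq, hqlen⟩ := hT.isConnected.exists_path_of_dist x v
    have heq : p.concat huv = q :=
      (hT.existsUnique_path x v).unique (concat_isPath hp huv hv) hq
    have h3 := congrArg SimpleGraph.Walk.length heq
    rw [SimpleGraph.Walk.length_concat] at h3
    omega

lemma unique_pred (hT : G.IsTree) (x : V) {u w v : V} (hu : G.Adj u v) (hw : G.Adj w v)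
    (hdu : G.dist x u + 1 = G.dist x v) (hdw : G.dist x w + 1 = G.dist x v) : u = w := by
  classical
  obtain ⟨pu, hpu, hpulen⟩ := hT.isConnected.exists_path_of_dist x u
  obtain ⟨pw, hpw, hpwlen⟩ := hT.isConnected.exists_path_of_dist x w
  have hvu : v ∉ pu.support := by
    intro hv
    have h1 := split_le pu hpulen hv
    have h2 : G.dist x v ≤ G.dist x v + G.dist v u := Nat.le_add_right _ _
    omega
  have hvw : v ∉ pw.support := by
    intro hv
    have h1 := split_le pw hpwlen hv
    omega
  have heq : pu.concat hu = pw.concat hw :=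
    (hT.existsUnique_path x v).unique (concat_isPath hpu hu hvu) (concat_isPath hpw hw hvw)
  have hd := congrArg SimpleGraph.Walk.darts heq
  rw [SimpleGraph.Walk.darts_concat, SimpleGraph.Walk.darts_concat] at hd
  have h1 := congrArg List.getLast? hd
  rw [List.concat_eq_append, List.concat_eq_append, List.getLast?_concat,
    List.getLast?_concat] at h1
  have h2 := Option.some.inj h1
  exact congrArg (fun d : G.Dart => d.toProd.1) h2

/-- A walk following a chain of adjacent vertices. -/
def chainWalk (G : SimpleGraph V) (f : ℕ → V) (hadj : ∀ k, G.Adj (f k) (f (k + 1))) :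
    (n : ℕ) → G.Walk (f 0) (f n)
  | 0 => SimpleGraph.Walk.nil
  | n + 1 => (chainWalk G f hadj n).concat (hadj n)

lemma chainWalk_darts (G : SimpleGraph V) (f : ℕ → V) (hadj : ∀ k, G.Adj (f k) (f (k + 1))) :
    ∀ n : ℕ, (chainWalk G f hadj n).darts
      = (List.range n).map (fun k => (⟨(f k, f (k + 1)), hadj k⟩ : G.Dart)) := by
  intro n
  induction n with
  | zero => rfl
  | succ n ih =>
    rw [chainWalk, SimpleGraph.Walk.darts_concat, ih, List.range_succ]
    simp [List.concat_eq_append]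

lemma chainWalk_support (G : SimpleGraph V) (f : ℕ → V) (hadj : ∀ k, G.Adj (f k) (f (k + 1))) :
    ∀ n : ℕ, (chainWalk G f hadj n).support = (List.range (n + 1)).map f := by
  intro n
  induction n with
  | zero => rfl
  | succ n ih =>
    rw [chainWalk, SimpleGraph.Walk.support_concat, ih, List.range_succ (n := n + 1)]
    simp [List.concat_eq_append]

lemma list_sum_map_range {M : Type*} [AddCommMonoid M] (g : ℕ → M) (n : ℕ) :
    ((List.range n).map g).sum = ∑ k ∈ Finset.range n, g k := by
  induction n with
  | zero => simp
  | succ n ih =>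
    rw [List.range_succ, List.map_append, List.sum_append, Finset.sum_range_succ, ih]
    simp

lemma vshape (hT : G.IsTree) (x₀ : V) (γ : ℤ → V)
    (hγ : ∀ i j : ℤ, (G.dist (γ i) (γ j) : ℤ) = |i - j|) (R : ℕ) (i₀ : ℤ)
    (hmin : ∀ i, R ≤ G.dist x₀ (γ i)) (h0 : G.dist x₀ (γ i₀) = R) :
    ∀ k : ℕ, G.dist x₀ (γ (i₀ + k)) = R + k := by
  have hγ' : ∀ i j : ℤ, G.dist (γ i) (γ j) = (i - j).natAbs := by
    intro i j
    have h1 := hγ i j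
    rw [← Int.natCast_natAbs] at h1
    exact_mod_cast h1
  have hinj : ∀ i j, γ i = γ j → i = j := by
    intro i j hij
    have h1 := hγ' i j
    rw [hij, SimpleGraph.dist_self] at h1
    omega
  have hadj : ∀ i : ℤ, G.Adj (γ i) (γ (i + 1)) := by
    intro i
    rw [← SimpleGraph.dist_eq_one_iff_adj, hγ']
    omega
  have hstep : ∀ i : ℤ, G.dist x₀ (γ (i + 1)) = G.dist x₀ (γ i) + 1 ∨
      G.dist x₀ (γ i) = G.dist x₀ (γ (i + 1)) + 1 := by
    intro i
    have h1 := hT.isConnected.dist_triangle (u := x₀) (v := γ i) (w := γ (i + 1))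
    have h2 := hT.isConnected.dist_triangle (u := x₀) (v := γ (i + 1)) (w := γ i)
    rw [hγ'] at h1 h2
    have h3 := adj_dist_ne hT x₀ (hadj i)
    omega
  have key : ∀ k : ℕ, G.dist x₀ (γ (i₀ + k)) = R + k ∧
      G.dist x₀ (γ (i₀ + k + 1)) = R + (k + 1) := by
    intro k
    induction k with
    | zero =>
      have h1 := hstep i₀
      have h2 := hmin (i₀ + 1)
      simp only [Nat.cast_zero, add_zero]
      omega
    | succ k ih =>
      obtain ⟨ih1, ih2⟩ := ih
      have hc1 : i₀ + ((k + 1 : ℕ) : ℤ) = i₀ + k + 1 := by push_cast; ring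
      have hc2 : i₀ + ((k + 1 : ℕ) : ℤ) + 1 = i₀ + k + 1 + 1 := by push_cast; ring
      rw [hc1]
      refine ⟨ih2, ?_⟩
      rcases hstep (i₀ + k + 1) with hs | hs
      · omega
      · exfalso
        have hu : G.Adj (γ (i₀ + k)) (γ (i₀ + k + 1)) := hadj _
        have hw : G.Adj (γ (i₀ + k + 1 + 1)) (γ (i₀ + k + 1)) := (hadj _).symm
        have he := unique_pred hT x₀ hu hw (by omega) (by omega)
        have := hinj _ _ he
        omega
  exact fun k => (key k).1

end FloydAux

open FloydAux in
/-- In the Floyd compactification of a regular tree (a metric space `X` in which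
the distance between vertices is the Floyd length of the connecting path), the
distance between two boundary points `p, p'` joined by the bi-infinite geodesic
`γ`, at combinatorial distance `R` from the base point `x₀`, equals
`2 ∑_{r ≥ R} h r`. -/
theorem floyd_distance_between_boundary_points
    {V : Type*} (G : SimpleGraph V) [G.LocallyFinite] (hT : G.IsTree)
    (n : ℕ) (hn : 3 ≤ n) (hreg : ∀ v : V, G.degree v = n)
    (h : ℕ → ℝ) (hpos : ∀ r, 0 < h r) (hsum : Summable h) (x₀ : V)
    {X : Type*} [MetricSpace X] (ι : V → X)
    (hdist : ∀ (x y : V) (w : G.Walk x y), w.IsPath →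
      dist (ι x) (ι y) = floydLength G x₀ h w)
    (γ : ℤ → V) (hγ : ∀ i j : ℤ, (G.dist (γ i) (γ j) : ℤ) = |i - j|)
    (p p' : X)
    (hp : Filter.Tendsto (fun i : ℕ => ι (γ i)) Filter.atTop (nhds p))
    (hp' : Filter.Tendsto (fun i : ℕ => ι (γ (-i))) Filter.atTop (nhds p'))
    (R : ℕ) (hRmin : ∀ i : ℤ, R ≤ G.dist x₀ (γ i))
    (hRatt : ∃ i : ℤ, G.dist x₀ (γ i) = R) :
    dist p p' = 2 * ∑' r : ℕ, h (R + r) := by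
  classical
  obtain ⟨i₀, hi₀⟩ := hRatt
  have hγ' : ∀ i j : ℤ, G.dist (γ i) (γ j) = (i - j).natAbs := by
    intro i j
    have h1 := hγ i j
    rw [← Int.natCast_natAbs] at h1
    exact_mod_cast h1
  have hinj : ∀ i j, γ i = γ j → i = j := by
    intro i j hij
    have h1 := hγ' i j
    rw [hij, SimpleGraph.dist_self] at h1
    omega
  have hadj : ∀ i : ℤ, G.Adj (γ i) (γ (i + 1)) := by
    intro i
    rw [← SimpleGraph.dist_eq_one_iff_adj, hγ']
    omega
  -- V-shape of the distance function along γ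
  have hright : ∀ k : ℕ, G.dist x₀ (γ (i₀ + k)) = R + k :=
    vshape hT x₀ γ hγ R i₀ hRmin hi₀
  have hleft : ∀ k : ℕ, G.dist x₀ (γ (i₀ - k)) = R + k := by
    have hγ2 : ∀ i j : ℤ, (G.dist (γ (2 * i₀ - i)) (γ (2 * i₀ - j)) : ℤ) = |i - j| := by
      intro i j
      rw [hγ, show (2 * i₀ - i) - (2 * i₀ - j) = j - i by ring, abs_sub_comm]
    have := vshape hT x₀ (fun i => γ (2 * i₀ - i)) hγ2 R i₀ (fun i => hRmin _)
      (by simpa [show 2 * i₀ - i₀ = i₀ by ring] using hi₀)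
    intro k
    have h1 := this k
    simpa [show 2 * i₀ - (i₀ + (k : ℤ)) = i₀ - k by ring] using h1
  have ddist : ∀ i : ℤ, G.dist x₀ (γ i) = R + (i - i₀).natAbs := by
    intro i
    rcases le_total i₀ i with hi | hi
    · have h1 := hright (i - i₀).toNat
      rw [show i₀ + (((i - i₀).toNat : ℕ) : ℤ) = i by omega] at h1
      rw [h1]; omega
    · have h1 := hleft (i₀ - i).toNat
      rw [show i₀ - (((i₀ - i).toNat : ℕ) : ℤ) = i by omega] at h1
      rw [h1]; omega
  -- The key finite computation
  have E : ∀ N : ℕ, dist (ι (γ (i₀ - N))) (ι (γ (i₀ + N)))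
      = 2 * ∑ j ∈ Finset.range N, h (R + j) := by
    intro N
    set f : ℕ → V := fun k => γ (i₀ - N + k) with hf
    have hadjf : ∀ k : ℕ, G.Adj (f k) (f (k + 1)) := by
      intro k
      show G.Adj (γ (i₀ - N + k)) (γ (i₀ - N + ((k + 1 : ℕ) : ℤ)))
      rw [show (i₀ - N + ((k + 1 : ℕ) : ℤ)) = (i₀ - N + k) + 1 by push_cast; ring]
      exact hadj _
    set w : G.Walk (f 0) (f (2 * N)) := chainWalk G f hadjf (2 * N) with hw
    have hwpath : w.IsPath := by
      rw [SimpleGraph.Walk.isPath_def, hw, chainWalk_support]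
      refine List.Nodup.map ?_ List.nodup_range
      intro a b hab
      have := hinj _ _ hab
      omega
    have hwlen : floydLength G x₀ h w = ∑ k ∈ Finset.range (2 * N),
        h (min (G.dist x₀ (f k)) (G.dist x₀ (f (k + 1)))) := by
      rw [floydLength, hw, chainWalk_darts, List.map_map, list_sum_map_range]
      rfl
    have hterm : ∀ k : ℕ, min (G.dist x₀ (f k)) (G.dist x₀ (f (k + 1)))
        = R + (if k < N then N - 1 - k else k - N) := by
      intro k
      show min (G.dist x₀ (γ (i₀ - N + k))) (G.dist x₀ (γ (i₀ - N + ((k + 1 : ℕ) : ℤ)))) = _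
      rw [ddist, ddist]
      split_ifs with hk <;> omega
    have hsumcalc : ∑ k ∈ Finset.range (2 * N),
        h (min (G.dist x₀ (f k)) (G.dist x₀ (f (k + 1))))
        = 2 * ∑ j ∈ Finset.range N, h (R + j) := by
      have h1 : ∀ k ∈ Finset.range (2 * N),
          h (min (G.dist x₀ (f k)) (G.dist x₀ (f (k + 1))))
          = h (R + (if k < N then N - 1 - k else k - N)) := by
        intro k _
        rw [hterm]
      rw [Finset.sum_congr rfl h1]
      rw [Finset.range_eq_Ico, ← Finset.sum_Ico_consecutive _ (Nat.zero_le N) (by omega)]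
      have h2 : ∑ k ∈ Finset.Ico 0 N, h (R + (if k < N then N - 1 - k else k - N))
          = ∑ j ∈ Finset.range N, h (R + j) := by
        rw [← Finset.range_eq_Ico]
        rw [show (∑ k ∈ Finset.range N, h (R + (if k < N then N - 1 - k else k - N)))
          = ∑ k ∈ Finset.range N, h (R + (N - 1 - k)) from
            Finset.sum_congr rfl (fun k hk => by
              rw [if_pos (Finset.mem_range.mp hk)])]
        exact Finset.sum_range_reflect (fun j => h (R + j)) N
      have h3 : ∑ k ∈ Finset.Ico N (2 * N), h (R + (if k < N then N - 1 - k else k - N))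
          = ∑ j ∈ Finset.range N, h (R + j) := by
        rw [Finset.sum_Ico_eq_sum_range]
        refine Finset.sum_congr (by congr 1; omega) (fun k hk => ?_)
        rw [if_neg (by omega)]
        congr 1
        omega
      rw [h2, h3]
      ring
    have hde : dist (ι (f 0)) (ι (f (2 * N))) = floydLength G x₀ h w :=
      hdist _ _ w hwpath
    have hf0 : f 0 = γ (i₀ - N) := by
      show γ (i₀ - N + ((0 : ℕ) : ℤ)) = γ (i₀ - N)
      norm_num
    have hf2N : f (2 * N) = γ (i₀ + N) := by
      show γ (i₀ - N + ((2 * N : ℕ) : ℤ)) = γ (i₀ + N)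
      congr 1
      push_cast
      ring
    rw [← hf0, ← hf2N]
    rw [hde, hwlen, hsumcalc]
  -- Limits
  have hA : Filter.Tendsto (fun N : ℕ => ι (γ (i₀ + N))) Filter.atTop (nhds p) := by
    have hm : Filter.Tendsto (fun N : ℕ => (i₀ + N).toNat) Filter.atTop Filter.atTop := by
      refine Filter.tendsto_atTop_atTop.mpr fun b => ⟨b + i₀.natAbs, fun a ha => by omega⟩
    have h1 := hp.comp hm
    refine h1.congr' ?_
    filter_upwards [Filter.eventually_ge_atTop i₀.natAbs] with N hN
    exact congrArg ι (congrArg γ (by simp only [Function.comp]; omega))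
  have hB : Filter.Tendsto (fun N : ℕ => ι (γ (i₀ - N))) Filter.atTop (nhds p') := by
    have hm : Filter.Tendsto (fun N : ℕ => ((N : ℤ) - i₀).toNat) Filter.atTop Filter.atTop := by
      refine Filter.tendsto_atTop_atTop.mpr fun b => ⟨b + i₀.natAbs, fun a ha => by omega⟩
    have h1 := hp'.comp hm
    refine h1.congr' ?_
    filter_upwards [Filter.eventually_ge_atTop i₀.natAbs] with N hN
    exact congrArg ι (congrArg γ (by simp only [Function.comp]; omega))
  have hD : Filter.Tendsto (fun N : ℕ => dist (ι (γ (i₀ - N))) (ι (γ (i₀ + N))))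
      Filter.atTop (nhds (dist p' p)) := hB.dist hA
  have hsum' : Summable (fun r : ℕ => h (R + r)) := by
    have h1 := (summable_nat_add_iff R).mpr hsum
    refine h1.congr fun r => ?_
    rw [add_comm]
  have hS : Filter.Tendsto (fun N : ℕ => 2 * ∑ j ∈ Finset.range N, h (R + j))
      Filter.atTop (nhds (2 * ∑' r : ℕ, h (R + r))) :=
    (hsum'.hasSum.tendsto_sum_nat).const_mul 2
  have hfinal : dist p' p = 2 * ∑' r : ℕ, h (R + r) :=
    tendsto_nhds_unique (hD.congr E) hS
  rw [_root_.dist_comm]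
  exact hfinal
end

section
/- Two Floyd metrics on the compactified regular tree obtained from the same base vertex x₀ and Floyd functions h₁, h₂ are locally Lipschitz equivalent if and only if h₁ and h₂ are comparable, i.e. there exists C > 1 with C⁻¹·h₂(r) ≤ h₁(r) ≤ C·h₂(r) for all r. -/
open SimpleGraph

private lemma floyd_list_sum_le {α : Type*} (f g : α → ℝ) (C : ℝ) :
    ∀ l : List α, (∀ a ∈ l, f a ≤ C * g a) →
      (l.map f).sum ≤ C * (l.map g).sum := by
  intro l
  induction l with
  | nil => simp
  | cons a l ih =>
    intro h
    simp only [List.map_cons, List.sum_cons, mul_add]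
    exact add_le_add (h a List.mem_cons_self) (ih fun b hb => h b (List.mem_cons_of_mem a hb))

/-- In a tree that is regular of degree `n ≥ 3`, every vertex at distance `r` from the
base vertex has a neighbour at distance `r + 1`. -/
private lemma tree_step {V : Type*} {G : SimpleGraph V} [G.LocallyFinite] (hT : G.IsTree)
    {n : ℕ} (hn : 3 ≤ n) (hreg : ∀ v : V, G.degree v = n) (x₀ : V) :
    ∀ (r : ℕ) (v : V), G.dist x₀ v = r → ∃ w, G.Adj v w ∧ G.dist x₀ w = r + 1 := by
  classical
  intro r v hv
  have hc : G.Connected := hT.isConnected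
  by_contra hno
  push_neg at hno
  have hadj_le : ∀ {a b : V}, G.Adj a b → G.dist x₀ b ≤ G.dist x₀ a + 1 := by
    intro a b hab
    have h1 : G.dist a b ≤ 1 := by simpa using SimpleGraph.dist_le hab.toWalk
    have h2 := hc.dist_triangle (u := x₀) (v := a) (w := b)
    omega
  -- no neighbour of `v` is at the same distance from `x₀`
  have hne : ∀ w, G.Adj v w → G.dist x₀ w ≠ r := by
    intro w hw hwr
    obtain ⟨pw, hpw, hpwlen⟩ := hc.exists_path_of_dist w x₀
    have hpwlen' : pw.length = r := by rw [hpwlen, SimpleGraph.dist_comm]; exact hwr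
    by_cases hvs : v ∈ pw.support
    · have h1 : G.dist v x₀ ≤ (pw.dropUntil v hvs).length := SimpleGraph.dist_le _
      have h2 : (pw.takeUntil v hvs).length + (pw.dropUntil v hvs).length = r := by
        have := congr_arg Walk.length (pw.take_spec hvs)
        rwa [Walk.length_append, hpwlen'] at this
      have hdv : G.dist v x₀ = r := by rw [SimpleGraph.dist_comm]; exact hv
      have h0 : (pw.takeUntil v hvs).length = 0 := by omega
      exact hw.ne (Walk.eq_of_length_eq_zero h0).symm
    · have hq : (Walk.cons hw pw).IsPath := hpw.cons hvs
      obtain ⟨pv, hpv, hpvlen⟩ := hc.exists_path_of_dist v x₀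
      have heq : Walk.cons hw pw = pv := (hT.existsUnique_path v x₀).unique hq hpv
      have h1 : (Walk.cons hw pw).length = r + 1 := by simp [hpwlen']
      rw [heq, hpvlen, SimpleGraph.dist_comm] at h1
      omega
  -- at most one neighbour of `v` is closer to `x₀`
  have huniq : ∀ a b, G.Adj v a → G.Adj v b → G.dist x₀ a + 1 = r → G.dist x₀ b + 1 = r →
      a = b := by
    intro a b ha hb hda hdb
    obtain ⟨pa, hpa, hpalen⟩ := hc.exists_path_of_dist a x₀
    obtain ⟨pb, hpb, hpblen⟩ := hc.exists_path_of_dist b x₀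
    have hva : v ∉ pa.support := by
      intro hvs
      have h1 : G.dist v x₀ ≤ (pa.dropUntil v hvs).length := SimpleGraph.dist_le _
      have h2 : (pa.dropUntil v hvs).length ≤ pa.length := Walk.length_dropUntil_le _ hvs
      have h3 : pa.length = G.dist x₀ a := by rw [hpalen, SimpleGraph.dist_comm]
      have hdv : G.dist v x₀ = r := by rw [SimpleGraph.dist_comm]; exact hv
      omega
    have hvb : v ∉ pb.support := by
      intro hvs
      have h1 : G.dist v x₀ ≤ (pb.dropUntil v hvs).length := SimpleGraph.dist_le _
      have h2 : (pb.dropUntil v hvs).length ≤ pb.length := Walk.length_dropUntil_le _ hvs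
      have h3 : pb.length = G.dist x₀ b := by rw [hpblen, SimpleGraph.dist_comm]
      have hdv : G.dist v x₀ = r := by rw [SimpleGraph.dist_comm]; exact hv
      omega
    have hqa : (Walk.cons ha pa).IsPath := hpa.cons hva
    have hqb : (Walk.cons hb pb).IsPath := hpb.cons hvb
    have heq : Walk.cons ha pa = Walk.cons hb pb :=
      (hT.existsUnique_path v x₀).unique hqa hqb
    have := congr_arg (fun p : G.Walk v x₀ => p.getVert 1) heq
    simpa [Walk.getVert_cons_succ] using this
  have hall : ∀ w ∈ G.neighborFinset v, G.dist x₀ w + 1 = r := by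
    intro w hw
    rw [SimpleGraph.mem_neighborFinset] at hw
    have h1 : G.dist x₀ w ≤ G.dist x₀ v + 1 := hadj_le hw
    have h2 : G.dist x₀ v ≤ G.dist x₀ w + 1 := hadj_le hw.symm
    have h3 := hne w hw
    have h4 := hno w hw
    omega
  have hcard : (G.neighborFinset v).card ≤ 1 := by
    refine Finset.card_le_one.mpr ?_
    intro a ha b hb
    exact huniq a b (by rwa [SimpleGraph.mem_neighborFinset] at ha)
      (by rwa [SimpleGraph.mem_neighborFinset] at hb) (hall a ha) (hall b hb)
  have hdeg : (G.neighborFinset v).card = n := by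
    rw [SimpleGraph.card_neighborFinset_eq_degree, hreg]
  omega

/-- In a tree regular of degree `n ≥ 3`, for each `r` there is an edge whose endpoints
are at distance `r` and `r + 1` from the base vertex. -/
private lemma tree_exists_level_edge {V : Type*} {G : SimpleGraph V} [G.LocallyFinite]
    (hT : G.IsTree) {n : ℕ} (hn : 3 ≤ n) (hreg : ∀ v : V, G.degree v = n) (x₀ : V) :
    ∀ r : ℕ, ∃ u v : V, G.Adj u v ∧ G.dist x₀ u = r ∧ G.dist x₀ v = r + 1 := by
  have hstep := tree_step hT hn hreg x₀
  have hex : ∀ r, ∃ u, G.dist x₀ u = r := by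
    intro r
    induction r with
    | zero => exact ⟨x₀, SimpleGraph.dist_self⟩
    | succ m ih =>
      obtain ⟨u, hu⟩ := ih
      obtain ⟨w, _, hw'⟩ := hstep m u hu
      exact ⟨w, hw'⟩
  intro r
  obtain ⟨u, hu⟩ := hex r
  obtain ⟨w, hw, hw'⟩ := hstep r u hu
  exact ⟨u, w, hw, hu, hw'⟩

private lemma floydLength_single_edge {V : Type*} (G : SimpleGraph V) (x₀ : V) (h : ℕ → ℝ)
    {u v : V} (hadj : G.Adj u v) {r : ℕ} (hu : G.dist x₀ u = r) (hv : G.dist x₀ v = r + 1) :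
    floydLength G x₀ h (Walk.cons hadj Walk.nil) = h r := by
  simp [floydLength, Walk.darts_cons, Walk.darts_nil, hu, hv, min_eq_left (Nat.le_succ r)]

/-- Two Floyd metrics on the compactified regular tree, obtained from the same
base vertex `x₀` and Floyd functions `h₁, h₂` (modelled as two compact metric
spaces `X₁, X₂` in which the tree embeds densely with distances given by Floyd
lengths, identified by a homeomorphism `e`), are locally Lipschitz equivalent if
and only if `h₁` and `h₂` are comparable. -/
theorem floyd_metrics_locally_lipschitz_iff_comparable
    {V : Type*} (G : SimpleGraph V) [G.LocallyFinite] (hT : G.IsTree)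
    (n : ℕ) (hn : 3 ≤ n) (hreg : ∀ v : V, G.degree v = n)
    (h₁ h₂ : ℕ → ℝ) (hpos₁ : ∀ r, 0 < h₁ r) (hpos₂ : ∀ r, 0 < h₂ r)
    (hsum₁ : Summable h₁) (hsum₂ : Summable h₂) (x₀ : V)
    {X₁ X₂ : Type*} [MetricSpace X₁] [MetricSpace X₂]
    [CompactSpace X₁] [CompactSpace X₂]
    (ι₁ : V → X₁) (ι₂ : V → X₂)
    (hdense₁ : DenseRange ι₁) (hdense₂ : DenseRange ι₂)
    (hdist₁ : ∀ (x y : V) (w : G.Walk x y), w.IsPath →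
      dist (ι₁ x) (ι₁ y) = floydLength G x₀ h₁ w)
    (hdist₂ : ∀ (x y : V) (w : G.Walk x y), w.IsPath →
      dist (ι₂ x) (ι₂ y) = floydLength G x₀ h₂ w)
    (e : X₁ ≃ₜ X₂) (he : ∀ x : V, e (ι₁ x) = ι₂ x) :
    (∀ p : X₁, ∃ U ∈ nhds p, ∃ K : ℝ, 0 < K ∧ ∀ q ∈ U, ∀ q' ∈ U,
        K⁻¹ * dist q q' ≤ dist (e q) (e q') ∧ dist (e q) (e q') ≤ K * dist q q')
    ↔ (∃ C : ℝ, 1 < C ∧ ∀ r : ℕ, C⁻¹ * h₂ r ≤ h₁ r ∧ h₁ r ≤ C * h₂ r) := by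
  classical
  have hc : G.Connected := hT.isConnected
  -- distances between vertex images
  have hedge : ∀ r : ℕ, ∃ u v : V, dist (ι₁ u) (ι₁ v) = h₁ r ∧ dist (ι₂ u) (ι₂ v) = h₂ r := by
    intro r
    obtain ⟨u, v, hadj, hu, hv⟩ := tree_exists_level_edge hT hn hreg x₀ r
    have hpath : (Walk.cons hadj Walk.nil).IsPath := by
      simp [Walk.cons_isPath_iff, hadj.ne]
    refine ⟨u, v, ?_, ?_⟩
    · rw [hdist₁ u v _ hpath, floydLength_single_edge G x₀ h₁ hadj hu hv]
    · rw [hdist₂ u v _ hpath, floydLength_single_edge G x₀ h₂ hadj hu hv]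
  constructor
  · -- local Lipschitz ⇒ comparable
    intro H
    choose U hU K hKpos hK using H
    have hcov : (Set.univ : Set X₁) ⊆ ⋃ p, interior (U p) := fun q _ =>
      Set.mem_iUnion.2 ⟨q, mem_interior_iff_mem_nhds.2 (hU q)⟩
    obtain ⟨t, ht⟩ := isCompact_univ.elim_finite_subcover (fun p => interior (U p))
      (fun _ => isOpen_interior) hcov
    have ht' : (Set.univ : Set X₁) ⊆ ⋃ p : t, interior (U p) := by
      intro q hq
      obtain ⟨i, hi, hmem⟩ := Set.mem_iUnion₂.1 (ht hq)
      exact Set.mem_iUnion.2 ⟨⟨i, hi⟩, hmem⟩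
    obtain ⟨δ, hδ, hleb⟩ := lebesgue_number_lemma_of_metric isCompact_univ
      (fun _ : t => isOpen_interior) ht'
    -- a uniform bound for the finitely many local constants
    obtain ⟨M, hM⟩ := (t.image K).exists_le
    have hM' : ∀ p ∈ t, K p ≤ M := fun p hp => hM _ (Finset.mem_image_of_mem K hp)
    have htne : t.Nonempty := by
      obtain ⟨i, hi⟩ := Set.mem_iUnion.1 (ht' (Set.mem_univ (ι₁ x₀)))
      exact ⟨i, i.2⟩
    have hMpos : 0 < M := lt_of_lt_of_le (hKpos htne.choose) (hM' _ htne.choose_spec)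
    -- far levels
    obtain ⟨N, hN⟩ : ∃ N : ℕ, ∀ r ≥ N, h₁ r < δ := by
      have := hsum₁.tendsto_atTop_zero
      have hev : ∀ᶠ r in Filter.atTop, h₁ r < δ := this (Iio_mem_nhds hδ)
      exact Filter.eventually_atTop.1 hev
    have hmain : ∀ r, N ≤ r → h₁ r ≤ M * h₂ r ∧ h₂ r ≤ M * h₁ r := by
      intro r hr
      obtain ⟨u, v, d1, d2⟩ := hedge r
      obtain ⟨i, hi⟩ := hleb (ι₁ u) (Set.mem_univ _)
      have hu' : ι₁ u ∈ U i := interior_subset (hi (Metric.mem_ball_self hδ))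
      have hv' : ι₁ v ∈ U i := by
        refine interior_subset (hi ?_)
        rw [Metric.mem_ball, _root_.dist_comm, d1]
        exact hN r hr
      obtain ⟨hlow, hhigh⟩ := hK i (ι₁ u) hu' (ι₁ v) hv'
      rw [he u, he v, d1, d2] at hlow hhigh
      have hKi : 0 < K i := hKpos i
      have hKiM : K i ≤ M := hM' i i.2
      constructor
      · have h1 : h₁ r ≤ K i * h₂ r := (inv_mul_le_iff₀ hKi).1 hlow
        calc h₁ r ≤ K i * h₂ r := h1
          _ ≤ M * h₂ r := mul_le_mul_of_nonneg_right hKiM (hpos₂ r).le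
      · calc h₂ r ≤ K i * h₁ r := hhigh
          _ ≤ M * h₁ r := mul_le_mul_of_nonneg_right hKiM (hpos₁ r).le
    -- small levels
    have hsmall : ∀ m : ℕ, ∃ B : ℝ, 0 < B ∧ ∀ r < m, h₁ r ≤ B * h₂ r ∧ h₂ r ≤ B * h₁ r := by
      intro m
      induction m with
      | zero => exact ⟨1, one_pos, fun r hr => absurd hr (by omega)⟩
      | succ m ih =>
        obtain ⟨B, hB, hB'⟩ := ih
        refine ⟨B + h₁ m / h₂ m + h₂ m / h₁ m, by have := hpos₁ m; have := hpos₂ m; positivity, ?_⟩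
        intro r hr
        have hx1 := (hpos₁ r).le
        have hx2 := (hpos₂ r).le
        have hq1 : 0 ≤ h₁ m / h₂ m := div_nonneg (hpos₁ m).le (hpos₂ m).le
        have hq2 : 0 ≤ h₂ m / h₁ m := div_nonneg (hpos₂ m).le (hpos₁ m).le
        rcases Nat.lt_succ_iff_lt_or_eq.1 hr with hr' | rfl
        · obtain ⟨ha, hb⟩ := hB' r hr'
          constructor <;> nlinarith [mul_nonneg hq1 hx2, mul_nonneg hq2 hx1,
            mul_nonneg hq1 hx1, mul_nonneg hq2 hx2]
        · have e1 : h₁ r / h₂ r * h₂ r = h₁ r := div_mul_cancel₀ _ (hpos₂ r).ne'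
          have e2 : h₂ r / h₁ r * h₁ r = h₂ r := div_mul_cancel₀ _ (hpos₁ r).ne'
          constructor <;> nlinarith [mul_nonneg hB.le hx1, mul_nonneg hB.le hx2,
            mul_nonneg hq1 hx1, mul_nonneg hq2 hx2]
    obtain ⟨B, hB, hB'⟩ := hsmall N
    refine ⟨M + B + 1, by linarith, ?_⟩
    have hCpos : (0 : ℝ) < M + B + 1 := by linarith
    intro r
    have hboth : h₁ r ≤ (M + B + 1) * h₂ r ∧ h₂ r ≤ (M + B + 1) * h₁ r := by
      rcases le_or_gt N r with hr | hr
      · obtain ⟨ha, hb⟩ := hmain r hr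
        constructor <;> nlinarith [(hpos₁ r).le, (hpos₂ r).le,
          mul_nonneg (by linarith : (0:ℝ) ≤ B + 1) (hpos₁ r).le,
          mul_nonneg (by linarith : (0:ℝ) ≤ B + 1) (hpos₂ r).le]
      · obtain ⟨ha, hb⟩ := hB' r hr
        constructor <;> nlinarith [(hpos₁ r).le, (hpos₂ r).le,
          mul_nonneg (by linarith : (0:ℝ) ≤ M + 1) (hpos₁ r).le,
          mul_nonneg (by linarith : (0:ℝ) ≤ M + 1) (hpos₂ r).le]
    exact ⟨(inv_mul_le_iff₀ hCpos).2 hboth.2, hboth.1⟩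
  · -- comparable ⇒ (globally, hence locally) Lipschitz
    rintro ⟨C, hC1, hC⟩
    have hCpos : (0 : ℝ) < C := lt_trans one_pos hC1
    have hcomp₁ : ∀ r, h₁ r ≤ C * h₂ r := fun r => (hC r).2
    have hcomp₂ : ∀ r, h₂ r ≤ C * h₁ r := by
      intro r
      have := (hC r).1
      calc h₂ r = C * (C⁻¹ * h₂ r) := by field_simp
        _ ≤ C * h₁ r := mul_le_mul_of_nonneg_left this hCpos.le
    -- comparison on vertices
    have hvert₂ : ∀ x y : V, dist (ι₂ x) (ι₂ y) ≤ C * dist (ι₁ x) (ι₁ y) := by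
      intro x y
      obtain ⟨p, hp, -⟩ := hc.exists_path_of_dist x y
      rw [hdist₁ x y p hp, hdist₂ x y p hp]
      exact floyd_list_sum_le _ _ C p.darts fun d _ => hcomp₂ _
    have hvert₁ : ∀ x y : V, dist (ι₁ x) (ι₁ y) ≤ C * dist (ι₂ x) (ι₂ y) := by
      intro x y
      obtain ⟨p, hp, -⟩ := hc.exists_path_of_dist x y
      rw [hdist₁ x y p hp, hdist₂ x y p hp]
      exact floyd_list_sum_le _ _ C p.darts fun d _ => hcomp₁ _
    -- extend to all of X₁ by density
    have hdenseP : DenseRange (fun z : V × V => (ι₁ z.1, ι₁ z.2)) := by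
      have := hdense₁.prodMap hdense₁
      convert this using 1
      rfl
    have hkey₂ : ∀ q q' : X₁, dist (e q) (e q') ≤ C * dist q q' := by
      have hclosed : IsClosed {z : X₁ × X₁ | dist (e z.1) (e z.2) ≤ C * dist z.1 z.2} := by
        apply isClosed_le
        · exact continuous_dist.comp
            ((e.continuous.comp continuous_fst).prodMk (e.continuous.comp continuous_snd))
        · exact continuous_const.mul continuous_dist
      have hrange : Set.range (fun z : V × V => (ι₁ z.1, ι₁ z.2)) ⊆
          {z : X₁ × X₁ | dist (e z.1) (e z.2) ≤ C * dist z.1 z.2} := by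
        rintro z ⟨⟨x, y⟩, rfl⟩
        simp only [Set.mem_setOf_eq, he]
        exact hvert₂ x y
      have hsub := closure_minimal hrange hclosed
      intro q q'
      have : (q, q') ∈ closure (Set.range (fun z : V × V => (ι₁ z.1, ι₁ z.2))) := by
        rw [hdenseP.closure_range]; trivial
      exact hsub this
    have hkey₁ : ∀ q q' : X₁, dist q q' ≤ C * dist (e q) (e q') := by
      have hclosed : IsClosed {z : X₁ × X₁ | dist z.1 z.2 ≤ C * dist (e z.1) (e z.2)} := by
        apply isClosed_le
        · exact continuous_dist
        · exact continuous_const.mul (continuous_dist.comp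
            ((e.continuous.comp continuous_fst).prodMk (e.continuous.comp continuous_snd)))
      have hrange : Set.range (fun z : V × V => (ι₁ z.1, ι₁ z.2)) ⊆
          {z : X₁ × X₁ | dist z.1 z.2 ≤ C * dist (e z.1) (e z.2)} := by
        rintro z ⟨⟨x, y⟩, rfl⟩
        simp only [Set.mem_setOf_eq, he]
        exact hvert₁ x y
      have hsub := closure_minimal hrange hclosed
      intro q q'
      have : (q, q') ∈ closure (Set.range (fun z : V × V => (ι₁ z.1, ι₁ z.2))) := by
        rw [hdenseP.closure_range]; trivial
      exact hsub this
    intro p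
    refine ⟨Set.univ, Filter.univ_mem, C, hCpos, ?_⟩
    intro q _ q' _
    refine ⟨?_, hkey₂ q q'⟩
    have h := hkey₁ q q'
    calc C⁻¹ * dist q q' ≤ C⁻¹ * (C * dist (e q) (e q')) :=
          mul_le_mul_of_nonneg_left h (by positivity)
      _ = dist (e q) (e q') := by field_simp
end

section
/- Let δ' be a length metric on the compactified regular tree 𝒯_n such that the boundary is at finite distance from a fixed vertex x₀, and define h(r) = min{δ'-length of e : e an edge at combinatorial distance r from x₀}. Then h is a Floyd function, i.e. ∑_{r} h(r) < ∞. -/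
open SimpleGraph

/-- Let `δ'` be a length metric on the compactified regular tree (modelled as a
metric space `X` containing the tree, with edge lengths `ℓ` and vertex distances
given by sums of edge lengths along paths), such that some boundary point `p` is
at finite distance from the base vertex `x₀` (there is a geodesic ray from `x₀`
converging in `X`). Then `h(r) := inf` of the `δ'`-lengths of edges at
combinatorial distance `r` from `x₀` is a Floyd function: `∑ h(r) < ∞`. -/
theorem min_edge_length_is_floyd_function
    {V : Type*} (G : SimpleGraph V) [G.LocallyFinite] (hT : G.IsTree)
    (n : ℕ) (hn : 3 ≤ n) (hreg : ∀ v : V, G.degree v = n) (x₀ : V)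
    {X : Type*} [MetricSpace X] (ι : V → X)
    (ℓ : G.Dart → ℝ) (hℓpos : ∀ d, 0 < ℓ d) (hℓsymm : ∀ d : G.Dart, ℓ d.symm = ℓ d)
    (hdist : ∀ (x y : V) (w : G.Walk x y), w.IsPath →
      dist (ι x) (ι y) = (w.darts.map ℓ).sum)
    (y : ℕ → V) (hy0 : y 0 = x₀)
    (hygeo : ∀ i j : ℕ, (G.dist (y i) (y j) : ℤ) = |(i : ℤ) - (j : ℤ)|)
    (p : X) (hconv : Filter.Tendsto (fun i : ℕ => ι (y i)) Filter.atTop (nhds p)) :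
    Summable (fun r : ℕ =>
      sInf {L : ℝ | ∃ d : G.Dart,
        min (G.dist x₀ d.toProd.1) (G.dist x₀ d.toProd.2) = r ∧ L = ℓ d}) := by
  -- distances along the ray
  have hdisty : ∀ i j : ℕ, G.dist (y i) (y j) = ((i : ℤ) - j).natAbs := by
    intro i j
    have h := hygeo i j
    rw [Int.abs_eq_natAbs] at h
    exact_mod_cast h
  -- adjacency of consecutive ray vertices
  have hadj : ∀ r : ℕ, G.Adj (y r) (y (r + 1)) := by
    intro r
    rw [← G.dist_eq_one_iff_adj, hdisty r (r + 1)]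
    simp
  -- injectivity of the ray
  have hinj : Function.Injective y := by
    intro i j hij
    have h := hdisty i j
    rw [hij, SimpleGraph.dist_self] at h
    omega
  -- the darts along the ray
  set d : ℕ → G.Dart := fun r => ⟨(y r, y (r + 1)), hadj r⟩ with hd
  -- distance from x₀
  have hx₀ : ∀ r : ℕ, G.dist x₀ (y r) = r := by
    intro r
    rw [← hy0, hdisty 0 r]
    omega
  -- paths along the ray
  have hpath : ∀ N : ℕ, ∃ w : G.Walk (y 0) (y N),
      w.support = (List.range (N + 1)).map y ∧
      (w.darts.map ℓ).sum = ∑ r ∈ Finset.range N, ℓ (d r) := by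
    intro N
    induction N with
    | zero => exact ⟨SimpleGraph.Walk.nil, by norm_num [List.range_succ], by simp⟩
    | succ N ih =>
      obtain ⟨w, hsup, hsum⟩ := ih
      refine ⟨w.concat (hadj N), ?_, ?_⟩
      · rw [SimpleGraph.Walk.support_concat, hsup, List.range_succ (n := N + 1)]
        simp
      · rw [SimpleGraph.Walk.darts_concat, Finset.sum_range_succ, ← hsum]
        simp [hd]
  -- partial sums equal distances to ι (y N)
  have hps : ∀ N : ℕ, ∑ r ∈ Finset.range N, ℓ (d r) = dist (ι (y 0)) (ι (y N)) := by
    intro N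
    obtain ⟨w, hsup, hsum⟩ := hpath N
    rw [← hsum, hdist _ _ w]
    rw [SimpleGraph.Walk.isPath_def, hsup]
    exact List.Nodup.map hinj List.nodup_range
  -- ℓ ∘ d is summable
  have hsummable : Summable (fun r => ℓ (d r)) := by
    apply summable_of_sum_range_le (c := dist (ι (y 0)) p)
    · intro r; exact (hℓpos _).le
    · intro N
      rw [hps N]
      have hmono : Monotone (fun N => ∑ r ∈ Finset.range N, ℓ (d r)) :=
        fun a b hab => Finset.sum_le_sum_of_subset_of_nonneg
          (Finset.range_subset_range.2 hab) (fun i _ _ => (hℓpos _).le)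
      have htend : Filter.Tendsto (fun N => ∑ r ∈ Finset.range N, ℓ (d r))
          Filter.atTop (nhds (dist (ι (y 0)) p)) := by
        simp only [hps]
        exact ((continuous_const.dist continuous_id).tendsto p).comp hconv
      rw [← hps N]
      exact hmono.ge_of_tendsto htend N
  -- compare
  refine Summable.of_nonneg_of_le (fun r => ?_) (fun r => ?_) hsummable
  · apply Real.sInf_nonneg
    rintro L ⟨e, -, rfl⟩
    exact (hℓpos e).le
  · apply csInf_le
    · exact ⟨0, by rintro L ⟨e, -, rfl⟩; exact (hℓpos e).le⟩
    · refine ⟨d r, ?_, rfl⟩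
      simp only [hd]
      rw [hx₀ r, hx₀ (r + 1)]
      omega
end

section
/- Suppose the Floyd compactification of 𝒯_n given by base point x₀ and Floyd function h is such that some unitary translation φ is locally bilipschitz at its attracting fixed boundary point p. Then there exist r₀ ∈ ℕ and η ∈ (0,1) such that h(r+1) ≥ η·h(r) for all r ≥ r₀; consequently (after modifying η) h(r+1) ≥ η'·h(r) for all r ∈ ℕ with some η' ∈ (0,1). -/
open SimpleGraph

lemma myConcatIsPath {V : Type*} {G : SimpleGraph V} {u v x : V} {w : G.Walk u v}
    (hw : w.IsPath) (h : G.Adj v x) (hx : x ∉ w.support) : (w.concat h).IsPath := by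
  rw [← Walk.isPath_reverse_iff, Walk.reverse_concat]
  exact hw.reverse.cons (by simpa using hx)

lemma myDistLeOfMem {V : Type*} [DecidableEq V] {G : SimpleGraph V} {u v c : V} (w : G.Walk u v)
    (hc : c ∈ w.support) : G.dist u c ≤ w.length :=
  le_trans (dist_le _) (w.length_takeUntil_le hc)

lemma myAdjDistNe {V : Type*} [DecidableEq V] {G : SimpleGraph V} (hT : G.IsTree) (x₀ : V) {a b : V}
    (hab : G.Adj a b) : G.dist x₀ a ≠ G.dist x₀ b := by
  intro hd
  obtain ⟨wa, pa, la⟩ := hT.isConnected.exists_path_of_dist x₀ a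
  obtain ⟨wb, pb, lb⟩ := hT.isConnected.exists_path_of_dist x₀ b
  have hbn : b ∉ wa.support := by
    intro hmem
    have h1 : G.dist x₀ b ≤ (wa.takeUntil b hmem).length := dist_le _
    have h2 : (wa.takeUntil b hmem).length + (wa.dropUntil b hmem).length = wa.length := by
      rw [← Walk.length_append, wa.take_spec hmem]
    have h3 : 1 ≤ (wa.dropUntil b hmem).length := by
      have : G.dist b a ≤ (wa.dropUntil b hmem).length := dist_le _
      have hone : G.dist b a = 1 := dist_eq_one_iff_adj.mpr hab.symm
      omega
    omega
  have pc : (wa.concat hab).IsPath := myConcatIsPath pa hab hbn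
  have := hT.IsAcyclic.path_unique ⟨wa.concat hab, pc⟩ ⟨wb, pb⟩
  have hlen : (wa.concat hab).length = wb.length := by
    rw [show wa.concat hab = wb from congrArg Subtype.val this]
  rw [Walk.length_concat] at hlen
  omega

lemma myUniqueParent {V : Type*} [DecidableEq V] {G : SimpleGraph V} (hT : G.IsTree) (x₀ : V) {a b c : V}
    (ha : G.Adj a c) (hb : G.Adj b c) (hda : G.dist x₀ a + 1 = G.dist x₀ c)
    (hdb : G.dist x₀ b + 1 = G.dist x₀ c) : a = b := by
  obtain ⟨wa, pa, la⟩ := hT.isConnected.exists_path_of_dist x₀ a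
  obtain ⟨wb, pb, lb⟩ := hT.isConnected.exists_path_of_dist x₀ b
  have hca : c ∉ wa.support := fun hm => by have := myDistLeOfMem wa hm; omega
  have hcb : c ∉ wb.support := fun hm => by have := myDistLeOfMem wb hm; omega
  have := hT.IsAcyclic.path_unique ⟨wa.concat ha, myConcatIsPath pa ha hca⟩
    ⟨wb.concat hb, myConcatIsPath pb hb hcb⟩
  obtain ⟨hv, -⟩ := Walk.concat_inj (congrArg Subtype.val this)
  exact hv


/-- If a unitary translation `φ` of the regular tree is locally bilipschitz at
its attracting boundary point `p` in the Floyd compactification, then the Floyd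
function `h` satisfies `h (r+1) ≥ η * h r` for all `r ≥ r₀` and some
`η ∈ (0,1)`; consequently, after modifying `η`, the inequality holds for all
`r ∈ ℕ`. -/
theorem locally_bilipschitz_at_attracting_point_gives_condition
    {V : Type*} (G : SimpleGraph V) [G.LocallyFinite] (hT : G.IsTree)
    (n : ℕ) (hn : 3 ≤ n) (hreg : ∀ v : V, G.degree v = n)
    (h : ℕ → ℝ) (hpos : ∀ r, 0 < h r) (hsum : Summable h) (x₀ : V)
    {X : Type*} [MetricSpace X] (ι : V → X)
    (hdist : ∀ (x y : V) (w : G.Walk x y), w.IsPath →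
      dist (ι x) (ι y) = floydLength G x₀ h w)
    (φ : G ≃g G) (y : ℤ → V)
    (hgeo : ∀ i j : ℤ, (G.dist (y i) (y j) : ℤ) = |i - j|)
    (hφ : ∀ i : ℤ, φ (y i) = y (i + 1))
    (d₀ : ℕ) (hd₀min : ∀ i : ℤ, d₀ ≤ G.dist x₀ (y i)) (hd₀att : G.dist x₀ (y 0) = d₀)
    (p : X) (hp : Filter.Tendsto (fun i : ℕ => ι (y i)) Filter.atTop (nhds p))
    (ε k : ℝ) (hε : 0 < ε) (hk : 1 ≤ k)
    (hbil : ∀ x x' : V, dist (ι x) p < ε → dist (ι x') p < ε →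
      k⁻¹ * dist (ι x) (ι x') ≤ dist (ι (φ x)) (ι (φ x')) ∧
      dist (ι (φ x)) (ι (φ x')) ≤ k * dist (ι x) (ι x')) :
    (∃ r₀ : ℕ, ∃ η : ℝ, 0 < η ∧ η < 1 ∧ ∀ r : ℕ, r₀ ≤ r → η * h r ≤ h (r + 1)) ∧
    (∃ η' : ℝ, 0 < η' ∧ η' < 1 ∧ ∀ r : ℕ, η' * h r ≤ h (r + 1)) := by
  classical
  have hk0 : (0:ℝ) < k := lt_of_lt_of_le one_pos hk
  -- adjacency along the geodesic
  have adj : ∀ i : ℤ, G.Adj (y i) (y (i + 1)) := by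
    intro i
    have := hgeo i (i + 1)
    have h1 : (G.dist (y i) (y (i+1)) : ℤ) = 1 := by
      rw [this, abs_sub_comm]; simp
    exact dist_eq_one_iff_adj.mp (by exact_mod_cast h1)
  have yne : ∀ i j : ℤ, i ≠ j → y i ≠ y j := by
    intro i j hij hyeq
    have h0 := hgeo i j
    rw [hyeq, SimpleGraph.dist_self] at h0
    have := abs_eq_zero.mp h0.symm
    omega
  -- each step changes distance to x₀ by exactly one
  have step : ∀ i : ℤ, G.dist x₀ (y (i+1)) = G.dist x₀ (y i) + 1 ∨
      G.dist x₀ (y (i+1)) + 1 = G.dist x₀ (y i) := by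
    intro i
    have t1 : G.dist x₀ (y (i+1)) ≤ G.dist x₀ (y i) + G.dist (y i) (y (i+1)) :=
      hT.isConnected.dist_triangle
    have t2 : G.dist x₀ (y i) ≤ G.dist x₀ (y (i+1)) + G.dist (y (i+1)) (y i) :=
      hT.isConnected.dist_triangle
    have e1 : G.dist (y i) (y (i+1)) = 1 := dist_eq_one_iff_adj.mpr (adj i)
    have e2 : G.dist (y (i+1)) (y i) = 1 := dist_eq_one_iff_adj.mpr (adj i).symm
    have hne := myAdjDistNe hT x₀ (adj i)
    omega
  -- distance formula along the ray
  have key : ∀ i : ℕ, G.dist x₀ (y i) = d₀ + i ∧ G.dist x₀ (y (i+1)) = d₀ + i + 1 := by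
    intro i
    induction i with
    | zero =>
      have hs := step 0
      have hm := hd₀min 1
      norm_num at hs ⊢
      omega
    | succ m ih =>
      obtain ⟨h1, h2⟩ := ih
      refine ⟨by push_cast; omega, ?_⟩
      push_cast
      rcases step ((m:ℤ)+1) with hs | hs
      · omega
      · exfalso
        have hda : G.dist x₀ (y (m:ℤ)) + 1 = G.dist x₀ (y ((m:ℤ)+1)) := by omega
        have hdb : G.dist x₀ (y ((m:ℤ)+1+1)) + 1 = G.dist x₀ (y ((m:ℤ)+1)) := by omega
        have := myUniqueParent hT x₀ (adj (m:ℤ)) (adj ((m:ℤ)+1)).symm hda hdb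
        exact yne (m:ℤ) ((m:ℤ)+1+1) (by omega) this
  -- Floyd distance of one edge
  have edge : ∀ i : ℤ, dist (ι (y i)) (ι (y (i+1)))
      = h (min (G.dist x₀ (y i)) (G.dist x₀ (y (i+1)))) := by
    intro i
    have hadj := adj i
    have hpath : (Walk.cons hadj Walk.nil).IsPath :=
      Walk.IsPath.nil.cons (by simp [hadj.ne])
    rw [hdist _ _ _ hpath]
    simp [floydLength]
  -- eventual proximity to p
  obtain ⟨N, hN⟩ := Metric.tendsto_atTop.mp hp ε hε
  -- the key inequality for r ≥ d₀ + N
  have main : ∀ r : ℕ, d₀ + N ≤ r → k⁻¹ * h r ≤ h (r + 1) := by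
    intro r hr
    set i : ℕ := r - d₀ with hi
    have hri : r = d₀ + i := by omega
    have hiN : N ≤ i := by omega
    have hp1 : dist (ι (y (i:ℤ))) p < ε := hN i hiN
    have hp2 : dist (ι (y ((i:ℤ)+1))) p < ε := by
      have := hN (i+1) (by omega)
      rwa [show ((i+1:ℕ):ℤ) = (i:ℤ)+1 by push_cast; ring] at this
    have hb := (hbil (y (i:ℤ)) (y ((i:ℤ)+1)) hp1 hp2).1
    rw [hφ (i:ℤ), hφ ((i:ℤ)+1)] at hb
    have k1 := key i
    have k2 := key (i+1)
    rw [show ((i+1:ℕ):ℤ) = (i:ℤ)+1 by push_cast; ring] at k2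
    have e1 : dist (ι (y (i:ℤ))) (ι (y ((i:ℤ)+1))) = h r := by
      rw [edge i, k1.1, k1.2, min_eq_left (by omega), hri]
    have e2 : dist (ι (y ((i:ℤ)+1))) (ι (y ((i:ℤ)+1+1))) = h (r+1) := by
      rw [edge ((i:ℤ)+1), k2.1, k2.2, min_eq_left (by omega)]
      congr 1
      omega
    rw [e1, e2] at hb
    exact hb
  set r₀ : ℕ := d₀ + N with hr₀
  set η : ℝ := (2*k)⁻¹ with hη
  have hη0 : 0 < η := by positivity
  have hη1 : η < 1 := by
    rw [hη, inv_lt_one_iff₀]; right; linarith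
  have hηk : η ≤ k⁻¹ := by
    apply inv_anti₀ hk0; linarith
  have first : ∀ r : ℕ, r₀ ≤ r → η * h r ≤ h (r + 1) := by
    intro r hr
    calc η * h r ≤ k⁻¹ * h r := by
          exact mul_le_mul_of_nonneg_right hηk (hpos r).le
      _ ≤ h (r+1) := main r hr
  refine ⟨⟨r₀, η, hη0, hη1, first⟩, ?_⟩
  have hne : (Finset.range (r₀+1)).Nonempty := ⟨0, by simp⟩
  set c : ℝ := (Finset.range (r₀+1)).inf' hne (fun r => h (r+1) / h r) with hc
  refine ⟨min η c, lt_min hη0 ?_, lt_of_le_of_lt (min_le_left _ _) hη1, ?_⟩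
  · exact (Finset.lt_inf'_iff hne).mpr (fun b _ => div_pos (hpos _) (hpos _))
  · intro r
    rcases le_or_gt r r₀ with hcase | hcase
    · have hle : min η c ≤ h (r+1) / h r :=
        le_trans (min_le_right _ _) (Finset.inf'_le _ (by simp; omega))
      calc min η c * h r ≤ (h (r+1) / h r) * h r :=
            mul_le_mul_of_nonneg_right hle (hpos r).le
        _ = h (r+1) := div_mul_cancel₀ _ (hpos r).ne'
    · calc min η c * h r ≤ η * h r :=
            mul_le_mul_of_nonneg_right (min_le_left _ _) (hpos r).le
        _ ≤ h (r+1) := first r hcase.le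
end
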